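/- Let N be a positive integer, c₁, c₂ real numbers, and l, l̃, m, m̄, m̃ integers, and set m' = (m̄ + m̃) mod N. Then the complex exponential identity e^{(2πi/N)(N c₁ l² − m' l + N c₂ (m'² − m²))} = 𝒜(l, l̃, m̃) · ℰ(m̄, m̃, l̃) · e^{(2πi/N)(N c₁ (l + l̃)² − m̄ (l + l̃) + N c₂ (m̄² − m²))} holds, where 𝒜(l, l̃, m̃) = e^{−(2πi/N)(N c₁ (2 l l̃ + l̃²) + m̃ l)} and ℰ(m̄, m̃, l̃) = e^{(2πi/N)(m̄ l̃ + N c₂ (((m̄ + m̃) mod N)² − m̄²))}. -/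

import Mathlib

open Complex

/-- the complex exponential identity used in the MD-CDDS derivation for AFDM.
With `m' = (m̄ + m̃) mod N`,
`e^{(2πi/N)(N c₁ l² − m' l + N c₂ (m'² − m²))}
  = 𝒜(l, l̃, m̃) · ℰ(m̄, m̃, l̃) · e^{(2πi/N)(N c₁ (l+l̃)² − m̄ (l+l̃) + N c₂ (m̄² − m²))}`,
where `𝒜(l, l̃, m̃) = e^{−(2πi/N)(N c₁ (2 l l̃ + l̃²) + m̃ l)}` and
`ℰ(m̄, m̃, l̃) = e^{(2πi/N)(m̄ l̃ + N c₂ (((m̄+m̃) mod N)² − m̄²))}`. -/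
theorem mdcdds_phase_identity (N : ℕ) (hN : 0 < N) (c₁ c₂ : ℝ)
    (l lt m mbar mt : ℤ) :
    Complex.exp ((2 * Real.pi * Complex.I / (N : ℂ)) *
        ((N : ℂ) * (c₁ : ℂ) * (l : ℂ) ^ 2 -
          (((mbar + mt) % (N : ℤ) : ℤ) : ℂ) * (l : ℂ) +
          (N : ℂ) * (c₂ : ℂ) * ((((mbar + mt) % (N : ℤ) : ℤ) : ℂ) ^ 2 - (m : ℂ) ^ 2))) =
      Complex.exp (-((2 * Real.pi * Complex.I / (N : ℂ)) *
          ((N : ℂ) * (c₁ : ℂ) * (2 * (l : ℂ) * (lt : ℂ) + (lt : ℂ) ^ 2) + (mt : ℂ) * (l : ℂ)))) *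
        Complex.exp ((2 * Real.pi * Complex.I / (N : ℂ)) *
          ((mbar : ℂ) * (lt : ℂ) +
            (N : ℂ) * (c₂ : ℂ) * ((((mbar + mt) % (N : ℤ) : ℤ) : ℂ) ^ 2 - (mbar : ℂ) ^ 2))) *
        Complex.exp ((2 * Real.pi * Complex.I / (N : ℂ)) *
          ((N : ℂ) * (c₁ : ℂ) * ((l : ℂ) + (lt : ℂ)) ^ 2 -
            (mbar : ℂ) * ((l : ℂ) + (lt : ℂ)) +
            (N : ℂ) * (c₂ : ℂ) * ((mbar : ℂ) ^ 2 - (m : ℂ) ^ 2))) := by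
  rw [← Complex.exp_add, ← Complex.exp_add]
  rw [Complex.exp_eq_exp_iff_exists_int]
  refine ⟨((mbar + mt) / (N : ℤ)) * l, ?_⟩
  have hq : ((((mbar + mt) % (N : ℤ) : ℤ)) : ℂ)
      = (mbar : ℂ) + (mt : ℂ) - (N : ℂ) * (((mbar + mt) / (N : ℤ) : ℤ) : ℂ) := by
    have := Int.emod_def (mbar + mt) (N : ℤ)
    rw [this]; push_cast; ring
  have hN0 : (N : ℂ) ≠ 0 := Nat.cast_ne_zero.mpr hN.ne'
  rw [hq]
  field_simp
  push_cast
  ring
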